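/- A connected marked graph whose only T-semi-flows are rational multiples of the all-ones vector has deficiency zero if and only if it is weakly reversible. -/

import Mathlib

/-- Input bag of a transition. -/
def preBag {P T : Type*} (Wm : P → T → ℕ) (t : T) : P → ℕ := fun p => Wm p t

/-- Output bag of a transition. -/
def postBag {P T : Type*} (Wp : P → T → ℕ) (t : T) : P → ℕ := fun p => Wp p t

/-- The finite set of complexes of the net. -/
def complexes {P T : Type*} [Fintype P] [Fintype T] [DecidableEq P]
    (Wm Wp : P → T → ℕ) : Finset (P → ℕ) :=
  (Finset.univ.image (preBag Wm)) ∪ (Finset.univ.image (postBag Wp))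

/-- `c` is a complex of the net. -/
def isComplex {P T : Type*} (Wm Wp : P → T → ℕ) (c : P → ℕ) : Prop :=
  (∃ t, c = preBag Wm t) ∨ (∃ t, c = postBag Wp t)

/-- Arc of the reaction graph. -/
def rarc {P T : Type*} (Wm Wp : P → T → ℕ) (c c' : P → ℕ) : Prop :=
  ∃ t, c = preBag Wm t ∧ c' = postBag Wp t

/-- Weak reversibility: every connected component of the reaction graph is
strongly connected. -/
def weaklyReversible {P T : Type*} (Wm Wp : P → T → ℕ) : Prop :=
  ∀ c c' : P → ℕ, isComplex Wm Wp c → isComplex Wm Wp c' →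
    Relation.ReflTransGen (fun a b => rarc Wm Wp a b ∨ rarc Wm Wp b a) c c' →
    Relation.ReflTransGen (rarc Wm Wp) c c'

/-- The (undirected) reaction graph on the set of complexes. -/
def reactionGraph {P T : Type*} [Fintype P] [Fintype T] [DecidableEq P]
    (Wm Wp : P → T → ℕ) : SimpleGraph {c // c ∈ complexes Wm Wp} :=
  SimpleGraph.fromRel (fun a b => rarc Wm Wp a.1 b.1)

/-- The incidence matrix `W = W⁺ − W⁻` with rational entries. -/
def incidence {P T : Type*} (Wm Wp : P → T → ℕ) : Matrix P T ℚ :=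
  Matrix.of fun p t => (Wp p t : ℚ) - (Wm p t : ℚ)

/-- The deficiency `|C| − ℓ − rank W`, as an integer. -/
noncomputable def deficiency {P T : Type*} [Fintype P] [Fintype T] [DecidableEq P]
    (Wm Wp : P → T → ℕ) : ℤ :=
  (Nat.card {c // c ∈ complexes Wm Wp} : ℤ)
    - (Nat.card (reactionGraph Wm Wp).ConnectedComponent : ℤ)
    - ((incidence Wm Wp).rank : ℤ)

/-- Adjacency of the bipartite net graph on places and transitions. -/
def netAdj {P T : Type*} (Wm Wp : P → T → ℕ) : (P ⊕ T) → (P ⊕ T) → Prop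
  | Sum.inl p, Sum.inr t => Wm p t ≠ 0 ∨ Wp p t ≠ 0
  | Sum.inr t, Sum.inl p => Wm p t ≠ 0 ∨ Wp p t ≠ 0
  | _, _ => False

/-- Connectedness of the Petri net. -/
def netConnected {P T : Type*} (Wm Wp : P → T → ℕ) : Prop :=
  ∀ x y : P ⊕ T, Relation.ReflTransGen (netAdj Wm Wp) x y

/-- Marked graph: all arc weights are at most 1 and every place has exactly one
input transition and exactly one output transition. -/
def isMarkedGraph {P T : Type*} (Wm Wp : P → T → ℕ) : Prop :=
  (∀ p t, Wm p t ≤ 1) ∧ (∀ p t, Wp p t ≤ 1) ∧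
  (∀ p, ∃! t, Wm p t ≠ 0) ∧ (∀ p, ∃! t, Wp p t ≠ 0)

section Aux
set_option linter.unusedSectionVars false

open Matrix Finset Relation

variable {P T : Type*} [Fintype P] [Fintype T] [DecidableEq P] [DecidableEq T]
variable (Wm Wp : P → T → ℕ)

lemma preBag_mem (t : T) : preBag Wm t ∈ complexes Wm Wp := by
  simp only [complexes, Finset.mem_union, Finset.mem_image]
  exact Or.inl ⟨t, Finset.mem_univ t, rfl⟩

lemma postBag_mem (t : T) : postBag Wp t ∈ complexes Wm Wp := by
  simp only [complexes, Finset.mem_union, Finset.mem_image]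
  exact Or.inr ⟨t, Finset.mem_univ t, rfl⟩

/-- abbreviation for the type of complexes -/
local notation "Cx" => {c // c ∈ complexes Wm Wp}

/-- The incidence matrix of the reaction graph. -/
def Amat : Matrix {c // c ∈ complexes Wm Wp} T ℚ :=
  Matrix.of fun c t =>
    (if c.1 = postBag Wp t then 1 else 0) - (if c.1 = preBag Wm t then 1 else 0)

lemma sum_subtype_ite {x : P → ℕ} (hx : x ∈ complexes Wm Wp) (f : Cx → ℚ) :
    ∑ c : Cx, (if c.1 = x then f c else 0) = f ⟨x, hx⟩ := by
  rw [Fintype.sum_eq_single (⟨x, hx⟩ : Cx)]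
  · simp
  · rintro ⟨b, hb⟩ hne
    simp only [ite_eq_right_iff]
    intro h
    exact absurd (Subtype.ext h) hne

lemma Amat_col (p : P) (t : T) :
    ∑ c : Cx, (c.1 p : ℚ) * Amat Wm Wp c t = incidence Wm Wp p t := by
  have : ∀ c : Cx, (c.1 p : ℚ) * Amat Wm Wp c t =
      (if c.1 = postBag Wp t then ((c.1 p : ℚ)) else 0)
        - (if c.1 = preBag Wm t then ((c.1 p : ℚ)) else 0) := by
    intro c
    simp only [Amat, Matrix.of_apply]
    split_ifs <;> ring
  rw [Finset.sum_congr rfl (fun c _ => this c), Finset.sum_sub_distrib,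
    sum_subtype_ite Wm Wp (postBag_mem Wm Wp t) (fun c => (c.1 p : ℚ)),
    sum_subtype_ite Wm Wp (preBag_mem Wm Wp t) (fun c => (c.1 p : ℚ))]
  simp [incidence, postBag, preBag]

lemma incidence_mulVec_eq (v : T → ℚ) (p : P) :
    (incidence Wm Wp).mulVec v p = ∑ c : Cx, (c.1 p : ℚ) * (Amat Wm Wp).mulVec v c := by
  simp only [Matrix.mulVec, dotProduct, Finset.mul_sum]
  rw [Finset.sum_comm]
  refine Finset.sum_congr rfl fun t _ => ?_
  rw [← Amat_col Wm Wp p t, Finset.sum_mul]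
  exact Finset.sum_congr rfl fun c _ => by ring

lemma kerA_le_kerW {v : T → ℚ} (h : (Amat Wm Wp).mulVec v = 0) :
    (incidence Wm Wp).mulVec v = 0 := by
  funext p
  rw [incidence_mulVec_eq, h]
  simp

end Aux
section Aux2
set_option linter.unusedSectionVars false
open Matrix Finset Relation

variable {P T : Type*} [Fintype P] [Fintype T] [DecidableEq P] [DecidableEq T]
variable (Wm Wp : P → T → ℕ)

lemma row_sum_zero (hmg : isMarkedGraph Wm Wp) (p : P) :
    ∑ t, incidence Wm Wp p t = 0 := by
  obtain ⟨hm1, hp1, hm, hp⟩ := hmg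
  have key : ∀ (W : P → T → ℕ), (∀ p t, W p t ≤ 1) → (∃! t, W p t ≠ 0) →
      ∑ t, (W p t : ℚ) = 1 := by
    intro W hle ⟨t, ht, hu⟩
    rw [Finset.sum_eq_single t]
    · have h1 : W p t = 1 := le_antisymm (hle p t) (Nat.one_le_iff_ne_zero.2 ht)
      rw [h1]; norm_num
    · intro b _ hbt
      have : ¬ (W p b ≠ 0) := fun h => hbt (hu b h)
      simp [not_not.mp this]
    · intro h; exact absurd (Finset.mem_univ t) h
  simp only [incidence, Matrix.of_apply, Finset.sum_sub_distrib]
  rw [key Wp hp1 (hp p), key Wm hm1 (hm p)]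
  ring

lemma ones_mem_kerW (hmg : isMarkedGraph Wm Wp) :
    (incidence Wm Wp).mulVec (fun _ => 1) = 0 := by
  funext p
  simp only [Matrix.mulVec, dotProduct, mul_one, Pi.zero_apply]
  exact row_sum_zero Wm Wp hmg p

lemma kerW_eq (hmg : isMarkedGraph Wm Wp)
    (hsf : ∀ v : T → ℚ, (∀ p, ∑ t, incidence Wm Wp p t * v t = 0) →
      ∃ a : ℚ, v = fun _ => a) :
    LinearMap.ker (incidence Wm Wp).mulVecLin
      = Submodule.span ℚ {(fun _ => 1 : T → ℚ)} := by
  apply le_antisymm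
  · intro v hv
    rw [LinearMap.mem_ker, Matrix.mulVecLin_apply] at hv
    obtain ⟨a, ha⟩ := hsf v (fun p => by
      have := congrFun hv p
      simpa [Matrix.mulVec, dotProduct] using this)
    rw [Submodule.mem_span_singleton]
    exact ⟨a, by funext t; simp [ha]⟩
  · rw [Submodule.span_le, Set.singleton_subset_iff]
    simp only [SetLike.mem_coe, LinearMap.mem_ker, Matrix.mulVecLin_apply]
    exact ones_mem_kerW Wm Wp hmg

lemma rankW_eq (hT : Nonempty T) (hmg : isMarkedGraph Wm Wp)
    (hsf : ∀ v : T → ℚ, (∀ p, ∑ t, incidence Wm Wp p t * v t = 0) →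
      ∃ a : ℚ, v = fun _ => a) :
    (incidence Wm Wp).rank + 1 = Fintype.card T := by
  have h := LinearMap.finrank_range_add_finrank_ker (incidence Wm Wp).mulVecLin
  rw [kerW_eq Wm Wp hmg hsf] at h
  have hne : (fun _ => 1 : T → ℚ) ≠ 0 := by
    intro h0
    have := congrFun h0 hT.some
    norm_num at this
  rw [finrank_span_singleton hne] at h
  rw [Matrix.rank]
  rw [h, Module.finrank_pi]
end Aux2
section Aux3
set_option linter.unusedSectionVars false
set_option maxHeartbeats 1000000
open Matrix Finset Relation

variable {P T : Type*} [Fintype P] [Fintype T] [DecidableEq P] [DecidableEq T]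
variable (Wm Wp : P → T → ℕ)

/-- balancedness of the reaction multigraph -/
def balanced : Prop :=
  ∀ c : P → ℕ, (Finset.univ.filter fun t => c = postBag Wp t).card
    = (Finset.univ.filter fun t => c = preBag Wm t).card

lemma Amat_mulVec_one (c : {c // c ∈ complexes Wm Wp}) :
    (Amat Wm Wp).mulVec (fun _ => 1) c
      = ((Finset.univ.filter fun t => c.1 = postBag Wp t).card : ℚ)
        - ((Finset.univ.filter fun t => c.1 = preBag Wm t).card : ℚ) := by
  simp only [Matrix.mulVec, dotProduct, mul_one, Amat, Matrix.of_apply,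
    Finset.sum_sub_distrib, Finset.sum_boole]

lemma balanced_iff :
    balanced Wm Wp ↔ (Amat Wm Wp).mulVec (fun _ => 1) = 0 := by
  constructor
  · intro hb
    funext c
    rw [Amat_mulVec_one, hb c.1]
    simp
  · intro h c
    by_cases hc : c ∈ complexes Wm Wp
    · have := congrFun h ⟨c, hc⟩
      rw [Amat_mulVec_one] at this
      have h2 : ((Finset.univ.filter fun t => c = postBag Wp t).card : ℚ)
          = ((Finset.univ.filter fun t => c = preBag Wm t).card : ℚ) := by
        have := sub_eq_zero.mp this
        exact_mod_cast this
      exact_mod_cast h2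
    · have h1 : (Finset.univ.filter fun t => c = postBag Wp t) = ∅ := by
        rw [Finset.filter_eq_empty_iff]
        intro t _ h; exact hc (h ▸ postBag_mem Wm Wp t)
      have h2 : (Finset.univ.filter fun t => c = preBag Wm t) = ∅ := by
        rw [Finset.filter_eq_empty_iff]
        intro t _ h; exact hc (h ▸ preBag_mem Wm Wp t)
      rw [h1, h2]

lemma rev_reach (hb : balanced Wm Wp) {u v : P → ℕ} (h : rarc Wm Wp u v) :
    Relation.ReflTransGen (rarc Wm Wp) v u := by
  classical
  obtain ⟨t0, hu, hv⟩ := h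
  set S : Finset (P → ℕ) :=
    (complexes Wm Wp).filter (fun c => Relation.ReflTransGen (rarc Wm Wp) v c) with hS
  have hvS : v ∈ S := by
    rw [hS, Finset.mem_filter]
    exact ⟨hv ▸ postBag_mem Wm Wp t0, Relation.ReflTransGen.refl⟩
  have hclosed : ∀ t : T, preBag Wm t ∈ S → postBag Wp t ∈ S := by
    intro t ht
    rw [hS, Finset.mem_filter] at ht ⊢
    exact ⟨postBag_mem Wm Wp t, ht.2.tail ⟨t, rfl, rfl⟩⟩
  set T1 : Finset T := Finset.univ.filter (fun t => preBag Wm t ∈ S) with hT1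
  set T2 : Finset T := Finset.univ.filter (fun t => postBag Wp t ∈ S) with hT2
  have hsub : T1 ⊆ T2 := by
    intro t ht
    rw [hT1, Finset.mem_filter] at ht
    rw [hT2, Finset.mem_filter]
    exact ⟨Finset.mem_univ t, hclosed t ht.2⟩
  have hcard2 : T2.card = ∑ c ∈ S, (Finset.univ.filter fun t => c = postBag Wp t).card := by
    rw [Finset.card_eq_sum_card_fiberwise (f := postBag Wp) (s := T2) (t := S)
      (fun t ht => (Finset.mem_filter.mp (Finset.mem_coe.mp ht)).2)]
    refine Finset.sum_congr rfl fun c hc => ?_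
    congr 1
    ext t
    simp only [hT2, Finset.mem_filter, Finset.mem_univ, true_and]
    constructor
    · rintro ⟨_, h⟩; exact h.symm
    · intro h; exact ⟨h ▸ hc, h.symm⟩
  have hcard1 : T1.card = ∑ c ∈ S, (Finset.univ.filter fun t => c = preBag Wm t).card := by
    rw [Finset.card_eq_sum_card_fiberwise (f := preBag Wm) (s := T1) (t := S)
      (fun t ht => (Finset.mem_filter.mp (Finset.mem_coe.mp ht)).2)]
    refine Finset.sum_congr rfl fun c hc => ?_
    congr 1
    ext t
    simp only [hT1, Finset.mem_filter, Finset.mem_univ, true_and]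
    constructor
    · rintro ⟨_, h⟩; exact h.symm
    · intro h; exact ⟨h ▸ hc, h.symm⟩
  have hcards : T2.card = T1.card := by
    rw [hcard1, hcard2]
    exact Finset.sum_congr rfl fun c _ => hb c
  have heq : T1 = T2 := Finset.eq_of_subset_of_card_le hsub (le_of_eq hcards)
  have ht02 : t0 ∈ T2 := by
    rw [hT2, Finset.mem_filter]
    exact ⟨Finset.mem_univ t0, hv ▸ hvS⟩
  have ht01 : t0 ∈ T1 := heq ▸ ht02
  rw [hT1, Finset.mem_filter] at ht01
  have := ht01.2
  rw [hS, Finset.mem_filter] at this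
  exact hu ▸ this.2

lemma dir_of_sym (hb : balanced Wm Wp) {c c' : P → ℕ}
    (h : Relation.ReflTransGen (fun a b => rarc Wm Wp a b ∨ rarc Wm Wp b a) c c') :
    Relation.ReflTransGen (rarc Wm Wp) c c' := by
  induction h with
  | refl => exact Relation.ReflTransGen.refl
  | tail hpath hstep ih =>
    rcases hstep with h | h
    · exact ih.tail h
    · exact ih.trans (rev_reach Wm Wp hb h)

lemma wr_of_balanced (hb : balanced Wm Wp) : weaklyReversible Wm Wp :=
  fun _ _ _ _ h => dir_of_sym Wm Wp hb h
end Aux3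
section Aux4
set_option linter.unusedSectionVars false
set_option maxHeartbeats 1000000
open Matrix Finset Relation

variable {P T : Type*} [Fintype P] [Fintype T] [DecidableEq P] [DecidableEq T]
variable (Wm Wp : P → T → ℕ)

/-- indicator of a complex as a vector indexed by complexes -/
def eCx (c : P → ℕ) : {c // c ∈ complexes Wm Wp} → ℚ :=
  fun d => if d.1 = c then 1 else 0

lemma Amat_mulVec_single (t : T) :
    (Amat Wm Wp).mulVec (fun s => if s = t then 1 else 0)
      = eCx Wm Wp (postBag Wp t) - eCx Wm Wp (preBag Wm t) := by
  funext c
  simp only [Matrix.mulVec, dotProduct, mul_ite, mul_one, mul_zero,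
    Finset.sum_ite_eq', Finset.mem_univ, if_true, Amat, Matrix.of_apply,
    eCx, Pi.sub_apply]

lemma flow_of_path {c c' : P → ℕ} (h : Relation.ReflTransGen (rarc Wm Wp) c c') :
    ∃ v : T → ℚ, (∀ s, 0 ≤ v s) ∧
      (Amat Wm Wp).mulVec v = eCx Wm Wp c' - eCx Wm Wp c := by
  induction h with
  | refl => exact ⟨0, fun s => le_refl 0, by simp [Matrix.mulVec_zero]⟩
  | tail hpath hstep ih =>
    obtain ⟨v, hv0, hv⟩ := ih
    obtain ⟨t, hb, hc'⟩ := hstep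
    refine ⟨v + fun s => if s = t then 1 else 0, fun s => ?_, ?_⟩
    · have : (0:ℚ) ≤ if s = t then 1 else 0 := by positivity
      exact add_nonneg (hv0 s) this
    · rw [Matrix.mulVec_add, hv, Amat_mulVec_single, ← hb, ← hc']
      abel

lemma one_mem_kerA_of_wr
    (hsf : ∀ v : T → ℚ, (∀ p, ∑ t, incidence Wm Wp p t * v t = 0) →
      ∃ a : ℚ, v = fun _ => a)
    (hwr : weaklyReversible Wm Wp) (t0 : T) :
    (Amat Wm Wp).mulVec (fun _ => 1) = 0 := by
  have hpath : Relation.ReflTransGen (rarc Wm Wp) (postBag Wp t0) (preBag Wm t0) := by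
    apply hwr
    · exact Or.inr ⟨t0, rfl⟩
    · exact Or.inl ⟨t0, rfl⟩
    · exact Relation.ReflTransGen.single (Or.inr ⟨t0, rfl, rfl⟩)
  obtain ⟨v, hv0, hv⟩ := flow_of_path Wm Wp hpath
  set u : T → ℚ := v + fun s => if s = t0 then 1 else 0 with hu
  have hAu : (Amat Wm Wp).mulVec u = 0 := by
    rw [hu, Matrix.mulVec_add, hv, Amat_mulVec_single]
    abel
  have hWu : (incidence Wm Wp).mulVec u = 0 := kerA_le_kerW Wm Wp hAu
  obtain ⟨a, ha⟩ := hsf u (fun p => by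
    have := congrFun hWu p
    simpa [Matrix.mulVec, dotProduct] using this)
  have hut0 : (1:ℚ) ≤ u t0 := by
    have h1 : u t0 = v t0 + 1 := by simp [hu]
    rw [h1]
    linarith [hv0 t0]
  have ha1 : (1:ℚ) ≤ a := by rw [ha] at hut0; exact hut0
  have hane : a ≠ 0 := by linarith
  have hone : (fun _ => (1:ℚ) : T → ℚ) = a⁻¹ • u := by
    funext s
    rw [ha]
    simp [Pi.smul_apply, smul_eq_mul, inv_mul_cancel₀ hane]
  rw [hone, Matrix.mulVec_smul, hAu, smul_zero]
end Aux4
section Aux5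
set_option linter.unusedSectionVars false
set_option maxHeartbeats 1000000
open Matrix Finset Relation

variable {P T : Type*} [Fintype P] [Fintype T] [DecidableEq P] [DecidableEq T]
variable (Wm Wp : P → T → ℕ)

lemma AmatT_mulVec (f : {c // c ∈ complexes Wm Wp} → ℚ) (t : T) :
    (Amat Wm Wp)ᵀ.mulVec f t
      = f ⟨postBag Wp t, postBag_mem Wm Wp t⟩ - f ⟨preBag Wm t, preBag_mem Wm Wp t⟩ := by
  have expand : ∀ c : {c // c ∈ complexes Wm Wp},
      (Amat Wm Wp)ᵀ t c * f c
        = (if c.1 = postBag Wp t then f c else 0) - (if c.1 = preBag Wm t then f c else 0) := by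
    intro c
    simp only [Matrix.transpose_apply, Amat, Matrix.of_apply]
    split_ifs <;> ring
  simp only [Matrix.mulVec, dotProduct]
  rw [Finset.sum_congr rfl (fun c _ => expand c), Finset.sum_sub_distrib,
    sum_subtype_ite Wm Wp (postBag_mem Wm Wp t) f,
    sum_subtype_ite Wm Wp (preBag_mem Wm Wp t) f]

lemma mk_pre_eq_mk_post (t : T) :
    (reactionGraph Wm Wp).connectedComponentMk ⟨preBag Wm t, preBag_mem Wm Wp t⟩
      = (reactionGraph Wm Wp).connectedComponentMk ⟨postBag Wp t, postBag_mem Wm Wp t⟩ := by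
  by_cases heq : (⟨preBag Wm t, preBag_mem Wm Wp t⟩ : {c // c ∈ complexes Wm Wp})
      = ⟨postBag Wp t, postBag_mem Wm Wp t⟩
  · rw [heq]
  · apply SimpleGraph.ConnectedComponent.connectedComponentMk_eq_of_adj
    exact ⟨heq, Or.inl ⟨t, rfl, rfl⟩⟩

lemma ker_const_on_components {f : {c // c ∈ complexes Wm Wp} → ℚ}
    (hf : (Amat Wm Wp)ᵀ.mulVec f = 0) {d d' : {c // c ∈ complexes Wm Wp}}
    (h : (reactionGraph Wm Wp).Reachable d d') : f d = f d' := by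
  have step : ∀ a b : {c // c ∈ complexes Wm Wp},
      (reactionGraph Wm Wp).Adj a b → f a = f b := by
    intro a b hab
    obtain ⟨hne, hor⟩ := hab
    have key : ∀ t : T, f ⟨postBag Wp t, postBag_mem Wm Wp t⟩
        = f ⟨preBag Wm t, preBag_mem Wm Wp t⟩ := by
      intro t
      have h0 := congrFun hf t
      rw [AmatT_mulVec] at h0
      have h0' : f ⟨postBag Wp t, postBag_mem Wm Wp t⟩
          - f ⟨preBag Wm t, preBag_mem Wm Wp t⟩ = 0 := h0
      linarith [h0']
    rcases hor with ⟨t, ha, hb⟩ | ⟨t, hb, ha⟩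
    · have h1 : a = ⟨preBag Wm t, preBag_mem Wm Wp t⟩ := Subtype.ext ha
      have h2 : b = ⟨postBag Wp t, postBag_mem Wm Wp t⟩ := Subtype.ext hb
      rw [h1, h2, key t]
    · have h1 : a = ⟨postBag Wp t, postBag_mem Wm Wp t⟩ := Subtype.ext ha
      have h2 : b = ⟨preBag Wm t, preBag_mem Wm Wp t⟩ := Subtype.ext hb
      rw [h1, h2, key t]
  obtain ⟨w⟩ := h
  induction w with
  | nil => rfl
  | cons hadj _ ih => exact (step _ _ hadj).trans ih

noncomputable def kerEquiv :
    ((reactionGraph Wm Wp).ConnectedComponent → ℚ)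
      ≃ₗ[ℚ] LinearMap.ker ((Amat Wm Wp)ᵀ.mulVecLin) := by
  apply LinearEquiv.ofBijective
    (LinearMap.codRestrict _ (LinearMap.funLeft ℚ ℚ
      (fun c => (reactionGraph Wm Wp).connectedComponentMk c)) ?_)
  constructor
  · intro g g' hgg'
    funext K
    induction K using SimpleGraph.ConnectedComponent.ind with
    | _ c => exact congrFun (Subtype.ext_iff.mp hgg') c
  · rintro ⟨f, hf⟩
    rw [LinearMap.mem_ker, Matrix.mulVecLin_apply] at hf
    refine ⟨fun K => f K.out, ?_⟩
    apply Subtype.ext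
    funext c
    simp only [LinearMap.codRestrict_apply, LinearMap.funLeft_apply]
    apply ker_const_on_components Wm Wp hf
    apply (SimpleGraph.ConnectedComponent.eq).mp
    exact ((reactionGraph Wm Wp).connectedComponentMk c).out_eq
  · intro g
    rw [LinearMap.mem_ker, Matrix.mulVecLin_apply]
    funext t
    rw [AmatT_mulVec]
    simp only [LinearMap.funLeft_apply]
    rw [mk_pre_eq_mk_post, sub_self]
    rfl

lemma rankA_eq :
    (Amat Wm Wp).rank + Nat.card (reactionGraph Wm Wp).ConnectedComponent
      = Nat.card {c // c ∈ complexes Wm Wp} := by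
  have hft : Fintype ((reactionGraph Wm Wp).ConnectedComponent) := Fintype.ofFinite _
  have h := LinearMap.finrank_range_add_finrank_ker ((Amat Wm Wp)ᵀ).mulVecLin
  rw [← Matrix.rank] at h
  rw [Matrix.rank_transpose] at h
  have hker : Module.finrank ℚ (LinearMap.ker ((Amat Wm Wp)ᵀ.mulVecLin))
      = Nat.card (reactionGraph Wm Wp).ConnectedComponent := by
    rw [← LinearEquiv.finrank_eq (kerEquiv Wm Wp), Module.finrank_pi]
    exact (Nat.card_eq_fintype_card).symm
  rw [hker, Module.finrank_pi] at h
  rw [h, Nat.card_eq_fintype_card]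
end Aux5

/-- A connected marked graph whose only T-semi-flows are rational multiples of
the all-ones vector has deficiency zero if and only if it is weakly reversible. -/
theorem stmt2 {P T : Type*} [Fintype P] [Fintype T] [DecidableEq P] [DecidableEq T]
    (Wm Wp : P → T → ℕ) (hmg : isMarkedGraph Wm Wp) (hconn : netConnected Wm Wp)
    (hsf : ∀ v : T → ℚ, (∀ p, ∑ t, incidence Wm Wp p t * v t = 0) →
      ∃ a : ℚ, v = fun _ => a) :
    deficiency Wm Wp = 0 ↔ weaklyReversible Wm Wp := by
  by_cases hT : Nonempty T
  case neg =>
    -- degenerate case: no transitions at all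
    haveI : IsEmpty T := not_nonempty_iff.mp hT
    have hcempty : complexes Wm Wp = ∅ := by
      simp [complexes]
    haveI hCx : IsEmpty {c // c ∈ complexes Wm Wp} :=
      ⟨fun c => by rw [hcempty] at c; exact absurd c.2 (Finset.notMem_empty c.1)⟩
    haveI hCC : IsEmpty (reactionGraph Wm Wp).ConnectedComponent :=
      ⟨fun K => SimpleGraph.ConnectedComponent.ind (fun c => isEmptyElim c) K⟩
    have hrk : (incidence Wm Wp).rank = 0 := by
      have := (incidence Wm Wp).rank_le_card_width
      simp [Fintype.card_eq_zero] at this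
      exact this
    have hdef : deficiency Wm Wp = 0 := by
      unfold deficiency
      rw [Nat.card_of_isEmpty, Nat.card_of_isEmpty, hrk]
      simp
    have hwr : weaklyReversible Wm Wp := by
      intro c c' hc _ _
      rcases hc with ⟨t, _⟩ | ⟨t, _⟩ <;> exact isEmptyElim t
    exact ⟨fun _ => hwr, fun _ => hdef⟩
  case pos =>
    obtain ⟨t0⟩ := hT
    set n := Fintype.card T with hn
    set CN := Nat.card {c // c ∈ complexes Wm Wp} with hCN
    set L := Nat.card (reactionGraph Wm Wp).ConnectedComponent with hL
    set rA := (Amat Wm Wp).rank with hrA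
    set rW := (incidence Wm Wp).rank with hrW
    set kA := Module.finrank ℚ (LinearMap.ker (Amat Wm Wp).mulVecLin) with hkA
    have e1 : rW + 1 = n := rankW_eq Wm Wp ⟨t0⟩ hmg hsf
    have e2 : rA + L = CN := rankA_eq Wm Wp
    have e3 : rA + kA = n := by
      have h := LinearMap.finrank_range_add_finrank_ker (Amat Wm Wp).mulVecLin
      rw [Module.finrank_pi] at h
      exact h
    have hkerle : LinearMap.ker (Amat Wm Wp).mulVecLin
        ≤ Submodule.span ℚ {(fun _ => 1 : T → ℚ)} := by
      rw [← kerW_eq Wm Wp hmg hsf]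
      intro v hv
      rw [LinearMap.mem_ker, Matrix.mulVecLin_apply] at hv ⊢
      exact kerA_le_kerW Wm Wp hv
    have hspan1 : Module.finrank ℚ (Submodule.span ℚ {(fun _ => 1 : T → ℚ)}) = 1 := by
      apply finrank_span_singleton
      intro h0
      have := congrFun h0 t0
      norm_num at this
    have hkle : kA ≤ 1 := by
      rw [hkA, ← hspan1]
      exact Submodule.finrank_mono hkerle
    have hdef_unfold : deficiency Wm Wp = (CN : ℤ) - (L : ℤ) - (rW : ℤ) := rfl
    constructor
    · -- deficiency zero → weakly reversible
      intro hdef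
      rw [hdef_unfold] at hdef
      have hkA1 : kA = 1 := by omega
      have hkereq : LinearMap.ker (Amat Wm Wp).mulVecLin
          = Submodule.span ℚ {(fun _ => 1 : T → ℚ)} := by
        apply Submodule.eq_of_le_of_finrank_le hkerle
        rw [hspan1, ← hkA, hkA1]
      have h1mem : (fun _ => 1 : T → ℚ) ∈ LinearMap.ker (Amat Wm Wp).mulVecLin := by
        rw [hkereq]
        exact Submodule.mem_span_singleton_self _
      rw [LinearMap.mem_ker, Matrix.mulVecLin_apply] at h1mem
      exact wr_of_balanced Wm Wp ((balanced_iff Wm Wp).mpr h1mem)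
    · -- weakly reversible → deficiency zero
      intro hwr
      have h1 : (Amat Wm Wp).mulVec (fun _ => 1) = 0 := one_mem_kerA_of_wr Wm Wp hsf hwr t0
      have hge : 1 ≤ kA := by
        rw [hkA, ← hspan1]
        apply Submodule.finrank_mono
        rw [Submodule.span_le, Set.singleton_subset_iff]
        rw [SetLike.mem_coe, LinearMap.mem_ker, Matrix.mulVecLin_apply]
        exact h1
      rw [hdef_unfold]
      omega
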